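/- In F_2[z_1, z_2, z_3], with x_h = z_1^h + z_2^h + z_3^h and σ_2, σ_3 the second and third elementary symmetric polynomials, the identity x_1^{2^i + 2^j} = x_{2^i}·x_{2^j} holds, and x_{2^i}·x_{2^j} = x_{2^i+2^j} + Σ_{a≠b} z_a^{2^i} z_b^{2^j}, where Σ_{a≠b} z_a^{2^i} z_b^{2^j} = σ_2^{2^i} x_{2^j-2^i} + σ_3^{2^i} x_{2^j-2^{i+1}} for i ≥ 0, j ≥ i+2. -/

import Mathlib

open MvPolynomial

theorem stmt_11 (i j : ℕ) (hij : i + 2 ≤ j) :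
    ((X 0 + X 1 + X 2 : MvPolynomial (Fin 3) (ZMod 2)) ^ (2 ^ i + 2 ^ j)
        = (X 0 ^ (2 ^ i) + X 1 ^ (2 ^ i) + X 2 ^ (2 ^ i))
            * (X 0 ^ (2 ^ j) + X 1 ^ (2 ^ j) + X 2 ^ (2 ^ j)))
    ∧ (((X 0 : MvPolynomial (Fin 3) (ZMod 2)) ^ (2 ^ i) + X 1 ^ (2 ^ i) + X 2 ^ (2 ^ i))
            * (X 0 ^ (2 ^ j) + X 1 ^ (2 ^ j) + X 2 ^ (2 ^ j))
        = (X 0 ^ (2 ^ i + 2 ^ j) + X 1 ^ (2 ^ i + 2 ^ j) + X 2 ^ (2 ^ i + 2 ^ j))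
          + ∑ a : Fin 3, ∑ b ∈ Finset.univ.erase a, X a ^ (2 ^ i) * X b ^ (2 ^ j))
    ∧ ((∑ a : Fin 3, ∑ b ∈ Finset.univ.erase a,
            (X a : MvPolynomial (Fin 3) (ZMod 2)) ^ (2 ^ i) * X b ^ (2 ^ j))
        = (X 0 * X 1 + X 0 * X 2 + X 1 * X 2) ^ (2 ^ i) *
              (X 0 ^ (2 ^ j - 2 ^ i) + X 1 ^ (2 ^ j - 2 ^ i) + X 2 ^ (2 ^ j - 2 ^ i))
          + (X 0 * X 1 * X 2) ^ (2 ^ i) *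
              (X 0 ^ (2 ^ j - 2 ^ (i + 1)) + X 1 ^ (2 ^ j - 2 ^ (i + 1))
                + X 2 ^ (2 ^ j - 2 ^ (i + 1)))) := by
  have hij' : 2 ^ (i + 1) ≤ 2 ^ j := Nat.pow_le_pow_right (by norm_num) (by omega)
  have hii : 2 ^ (i + 1) = 2 * 2 ^ i := by ring
  have h2 : (2 : MvPolynomial (Fin 3) (ZMod 2)) = 0 := by
    exact_mod_cast CharP.cast_eq_zero (MvPolynomial (Fin 3) (ZMod 2)) 2
  have he0 : (Finset.univ.erase (0 : Fin 3)) = {1, 2} := by decide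
  have he1 : (Finset.univ.erase (1 : Fin 3)) = {0, 2} := by decide
  have he2 : (Finset.univ.erase (2 : Fin 3)) = {0, 1} := by decide
  simp only [Fin.sum_univ_three, he0, he1, he2,
    Finset.sum_pair (by decide : (1 : Fin 3) ≠ 2),
    Finset.sum_pair (by decide : (0 : Fin 3) ≠ 2),
    Finset.sum_pair (by decide : (0 : Fin 3) ≠ 1)]
  obtain ⟨D, hD⟩ : ∃ D, 2 ^ j - 2 ^ i = D := ⟨_, rfl⟩
  obtain ⟨E, hE⟩ : ∃ E, 2 ^ j - 2 ^ (i + 1) = E := ⟨_, rfl⟩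
  have hMD : 2 ^ i + D = 2 ^ j := by omega
  have hME : 2 ^ i + E = D := by omega
  rw [hD, hE, pow_add]
  simp only [add_pow_char_pow, mul_pow]
  rw [← hMD, ← hME]
  refine ⟨by trivial, by ring, ?_⟩
  linear_combination (-((X 0 : MvPolynomial (Fin 3) (ZMod 2)) ^ (2 ^ i + E) * X 1 ^ (2 ^ i) * X 2 ^ (2 ^ i)
    + X 0 ^ (2 ^ i) * X 1 ^ (2 ^ i + E) * X 2 ^ (2 ^ i)
    + X 0 ^ (2 ^ i) * X 1 ^ (2 ^ i) * X 2 ^ (2 ^ i + E))) * h2
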